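/- (Gap between the new analytical bound and the KAT bound) Let N ≥ 2 and let α_1,…,α_N, γ_1,…,γ_N be real numbers with α_i > 0 and α_i ≤ γ_i ≤ N·α_i for all i. Let δ = max(0, max_i (γ_i − (N−1)α_i)), and assume δ < α_i and δ ≤ (γ_i − α_i)/(N−1) for all i. Set α_i' = α_i − δ, γ_i' = γ_i − N·δ, ℓ_KAT = Σ_{i=1}^N [1/⌊γ_i/α_i⌋ − (γ_i/α_i − ⌊γ_i/α_i⌋)/((1+⌊γ_i/α_i⌋)⌊γ_i/α_i⌋)]·α_i, and ℓ_YAT = δ + Σ_{i=1}^N [1/χ(γ_i'/α_i') − (γ_i'/α_i' − χ(γ_i'/α_i'))/((1+χ(γ_i'/α_i'))·χ(γ_i'/α_i'))]·α_i'. Then ℓ_YAT − ℓ_KAT ≥ ( Σ_{i=1}^N (N − χ(γ_i/α_i))·(N − χ(γ_i/α_i) − 1) / ( χ(γ_i/α_i)·(χ(γ_i/α_i) + 1) ) ) · δ/N. -/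

import Mathlib

open Classical in
/-- `χ(x) = x − 1` if `x` is an integer with `x ≥ 2`, and `χ(x) = ⌊x⌋` otherwise. -/
noncomputable def chi (x : ℝ) : ℝ :=
  if (∃ n : ℤ, x = (n : ℝ)) ∧ 2 ≤ x then x - 1 else (⌊x⌋ : ℝ)

lemma chi_spec (x : ℝ) (hx : 1 ≤ x) :
    ∃ m : ℤ, chi x = (m : ℝ) ∧ 1 ≤ m ∧ (m : ℝ) ≤ x ∧ x ≤ (m : ℝ) + 1 := by
  unfold chi
  split_ifs with h
  · obtain ⟨⟨n, hn⟩, h2⟩ := h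
    subst hn
    have hn2 : (2 : ℤ) ≤ n := by exact_mod_cast h2
    exact ⟨n - 1, by push_cast; ring, by omega, by push_cast; linarith, by push_cast; linarith⟩
  · refine ⟨⌊x⌋, rfl, Int.le_floor.mpr (by exact_mod_cast hx), Int.floor_le x,
      (Int.lt_floor_add_one x).le⟩

lemma kat_eq (x : ℝ) (hx : 1 ≤ x) :
    1 / (⌊x⌋ : ℝ) - (x - (⌊x⌋ : ℝ)) / ((1 + (⌊x⌋ : ℝ)) * (⌊x⌋ : ℝ))
      = (2 * chi x + 1 - x) / (chi x * (chi x + 1)) := by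
  have hf : (1 : ℝ) ≤ (⌊x⌋ : ℝ) := by exact_mod_cast Int.le_floor.mpr (by exact_mod_cast hx)
  unfold chi
  split_ifs with h
  · obtain ⟨⟨n, hn⟩, h2⟩ := h
    subst hn
    have hfl : (⌊(n : ℝ)⌋ : ℝ) = (n : ℝ) := by simp
    have hn2 : (2 : ℝ) ≤ (n : ℝ) := h2
    rw [hfl]
    have h0 : (n : ℝ) ≠ 0 := by linarith
    have h1 : (n : ℝ) - 1 ≠ 0 := by intro hc; rw [sub_eq_zero] at hc; linarith
    have h1' : (1 : ℝ) + (n : ℝ) ≠ 0 := by linarith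
    field_simp
    rw [sub_add_cancel, eq_div_iff h0]
    ring
  · have h0 : (⌊x⌋ : ℝ) ≠ 0 := by linarith
    have h1 : (1 : ℝ) + (⌊x⌋ : ℝ) ≠ 0 := by linarith
    field_simp
    ring

lemma L_mono (m m' : ℤ) (hm : 1 ≤ m) (hm' : 1 ≤ m') (y : ℝ)
    (h1 : (m' : ℝ) ≤ y) (h2 : y ≤ (m' : ℝ) + 1) :
    (2 * (m : ℝ) + 1 - y) / ((m : ℝ) * ((m : ℝ) + 1))
      ≤ (2 * (m' : ℝ) + 1 - y) / ((m' : ℝ) * ((m' : ℝ) + 1)) := by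
  have hmr : (1 : ℝ) ≤ (m : ℝ) := by exact_mod_cast hm
  have hm'r : (1 : ℝ) ≤ (m' : ℝ) := by exact_mod_cast hm'
  rw [div_le_div_iff₀ (by nlinarith) (by nlinarith)]
  rcases lt_trichotomy m m' with h | h | h
  · have hle : (m : ℝ) + 1 ≤ (m' : ℝ) := by exact_mod_cast h
    have hb : 2 * (m : ℝ) * m' + m + m' + 1 - y * (m + m' + 1) ≤ 0 := by
      nlinarith [mul_nonneg (by linarith : (0:ℝ) ≤ (m:ℝ) + m' + 1) (by linarith : (0:ℝ) ≤ y - m')]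
    have hP : (2 * (m' : ℝ) + 1 - y) * ((m : ℝ) * ((m : ℝ) + 1))
        - (2 * (m : ℝ) + 1 - y) * ((m' : ℝ) * ((m' : ℝ) + 1))
        = ((m : ℝ) - m') * (2 * (m : ℝ) * m' + m + m' + 1 - y * (m + m' + 1)) := by ring
    nlinarith [mul_nonpos_of_nonpos_of_nonneg (by linarith : (2 * (m : ℝ) * m' + m + m' + 1 - y * (m + m' + 1)) ≤ 0) (by linarith : (0:ℝ) ≤ (m':ℝ) - m), hP]
  · subst h; exact le_rfl
  · have hle : (m' : ℝ) + 1 ≤ (m : ℝ) := by exact_mod_cast h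
    have hb : 0 ≤ 2 * (m : ℝ) * m' + m + m' + 1 - y * (m + m' + 1) := by
      nlinarith [mul_nonneg (by linarith : (0:ℝ) ≤ (m:ℝ) + m' + 1) (by linarith : (0:ℝ) ≤ (m':ℝ) + 1 - y)]
    have hP : (2 * (m' : ℝ) + 1 - y) * ((m : ℝ) * ((m : ℝ) + 1))
        - (2 * (m : ℝ) + 1 - y) * ((m' : ℝ) * ((m' : ℝ) + 1))
        = ((m : ℝ) - m') * (2 * (m : ℝ) * m' + m + m' + 1 - y * (m + m' + 1)) := by ring
    nlinarith [mul_nonneg (by linarith : (0:ℝ) ≤ (m:ℝ) - m') hb, hP]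

lemma key_ineq (N : ℕ) (hN : 2 ≤ N) (A G δ : ℝ) (hA : 0 < A) (h1 : A ≤ G)
    (hδ0 : 0 ≤ δ) (hδA : δ < A) (hδ1 : δ ≤ (G - A) / ((N : ℝ) - 1))
    (hδ2 : G - ((N : ℝ) - 1) * A ≤ δ) :
    ((N : ℝ) - chi (G / A)) * ((N : ℝ) - chi (G / A) - 1) /
        (chi (G / A) * (chi (G / A) + 1)) * (δ / (N : ℝ))
      ≤ (1 / chi ((G - (N : ℝ) * δ) / (A - δ)) -
          ((G - (N : ℝ) * δ) / (A - δ) - chi ((G - (N : ℝ) * δ) / (A - δ))) /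
            ((1 + chi ((G - (N : ℝ) * δ) / (A - δ))) * chi ((G - (N : ℝ) * δ) / (A - δ)))) *
          (A - δ)
        - (1 / (⌊G / A⌋ : ℝ) - (G / A - (⌊G / A⌋ : ℝ)) /
            ((1 + (⌊G / A⌋ : ℝ)) * (⌊G / A⌋ : ℝ))) * A
        + δ / (N : ℝ) := by
  have hNR : (2 : ℝ) ≤ (N : ℝ) := by exact_mod_cast hN
  have hN0 : (0 : ℝ) < (N : ℝ) := by linarith
  set x : ℝ := G / A with hxdef
  have hx1 : 1 ≤ x := (one_le_div hA).mpr h1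
  obtain ⟨m, hchi, hm1, hmx, hxm⟩ := chi_spec x hx1
  have hmr : (1 : ℝ) ≤ (m : ℝ) := by exact_mod_cast hm1
  have hA' : 0 < A - δ := by linarith
  have hG' : A - δ ≤ G - (N : ℝ) * δ := by
    have h := (le_div_iff₀ (by linarith : (0 : ℝ) < (N : ℝ) - 1)).mp hδ1
    nlinarith
  set x' : ℝ := (G - (N : ℝ) * δ) / (A - δ) with hx'def
  have hx'1 : 1 ≤ x' := (one_le_div hA').mpr hG'
  obtain ⟨m', hchi', hm'1, hm'x, hx'm⟩ := chi_spec x' hx'1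
  have hm'r : (1 : ℝ) ≤ (m' : ℝ) := by exact_mod_cast hm'1
  have hxA : x * A = G := div_mul_cancel₀ G hA.ne'
  have hx'A : x' * (A - δ) = G - (N : ℝ) * δ := div_mul_cancel₀ _ hA'.ne'
  -- value of the KAT term
  have hK : (1 / (⌊x⌋ : ℝ) - (x - (⌊x⌋ : ℝ)) / ((1 + (⌊x⌋ : ℝ)) * (⌊x⌋ : ℝ))) * A
      = ((2 * (m : ℝ) + 1) * A - G) / ((m : ℝ) * ((m : ℝ) + 1)) := by
    rw [kat_eq x hx1, hchi, div_mul_eq_mul_div]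
    congr 1
    linear_combination -hxA
  -- value of the YAT term
  have hY : (1 / chi x' - (x' - chi x') / ((1 + chi x') * chi x')) * (A - δ)
      = ((2 * (m' : ℝ) + 1) * (A - δ) - (G - (N : ℝ) * δ)) / ((m' : ℝ) * ((m' : ℝ) + 1)) := by
    rw [hchi']
    have e : 1 / (m' : ℝ) - (x' - (m' : ℝ)) / ((1 + (m' : ℝ)) * (m' : ℝ))
        = (2 * (m' : ℝ) + 1 - x') / ((m' : ℝ) * ((m' : ℝ) + 1)) := by
      have h0 : (m' : ℝ) ≠ 0 := by linarith
      have h1 : (1 : ℝ) + (m' : ℝ) ≠ 0 := by linarith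
      field_simp
      ring
    rw [e, div_mul_eq_mul_div]
    congr 1
    linear_combination -hx'A
  have hmono := L_mono m m' hm1 hm'1 x' hm'x hx'm
  have hstep : ((2 * (m : ℝ) + 1) * (A - δ) - (G - (N : ℝ) * δ)) / ((m : ℝ) * ((m : ℝ) + 1))
      ≤ ((2 * (m' : ℝ) + 1) * (A - δ) - (G - (N : ℝ) * δ)) / ((m' : ℝ) * ((m' : ℝ) + 1)) := by
    have h := mul_le_mul_of_nonneg_right hmono hA'.le
    rw [div_mul_eq_mul_div, div_mul_eq_mul_div] at h
    have e1 : (2 * (m : ℝ) + 1) * (A - δ) - (G - (N : ℝ) * δ)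
        = (2 * (m : ℝ) + 1 - x') * (A - δ) := by linear_combination hx'A
    have e2 : (2 * (m' : ℝ) + 1) * (A - δ) - (G - (N : ℝ) * δ)
        = (2 * (m' : ℝ) + 1 - x') * (A - δ) := by linear_combination hx'A
    rw [e1, e2]
    exact h
  rw [hchi, hY, hK]
  have h0 : (m : ℝ) ≠ 0 := by linarith
  have h1 : (m : ℝ) + 1 ≠ 0 := by linarith
  have heq : ((N : ℝ) - (m : ℝ)) * ((N : ℝ) - (m : ℝ) - 1) /
        ((m : ℝ) * ((m : ℝ) + 1)) * (δ / (N : ℝ))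
      = ((2 * (m : ℝ) + 1) * (A - δ) - (G - (N : ℝ) * δ)) / ((m : ℝ) * ((m : ℝ) + 1))
        - ((2 * (m : ℝ) + 1) * A - G) / ((m : ℝ) * ((m : ℝ) + 1)) + δ / (N : ℝ) := by
    field_simp
    ring
  linarith [hstep]

/-- Lower bound on the gap `ℓ_YAT − ℓ_KAT` between the new analytical bound and the KAT bound. -/
theorem yat_kat_gap (N : ℕ) (hN : 2 ≤ N) (α γ : Fin N → ℝ)
    (hαpos : ∀ i, 0 < α i) (hγ1 : ∀ i, α i ≤ γ i) (hγ2 : ∀ i, γ i ≤ (N : ℝ) * α i)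
    (δ : ℝ)
    (hδ : δ = max 0 (Finset.univ.sup' (Finset.univ_nonempty_iff.mpr ⟨⟨0, by omega⟩⟩)
        (fun i => γ i - ((N : ℝ) - 1) * α i)))
    (hδα : ∀ i, δ < α i) (hδβ : ∀ i, δ ≤ (γ i - α i) / ((N : ℝ) - 1))
    (α' γ' : Fin N → ℝ)
    (hα' : ∀ i, α' i = α i - δ) (hγ' : ∀ i, γ' i = γ i - (N : ℝ) * δ)
    (lKAT lYAT : ℝ)
    (hKAT : lKAT = ∑ i : Fin N, (1 / (⌊γ i / α i⌋ : ℝ) -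
        (γ i / α i - (⌊γ i / α i⌋ : ℝ)) /
          ((1 + (⌊γ i / α i⌋ : ℝ)) * (⌊γ i / α i⌋ : ℝ))) * α i)
    (hYAT : lYAT = δ + ∑ i : Fin N, (1 / chi (γ' i / α' i) -
        (γ' i / α' i - chi (γ' i / α' i)) /
          ((1 + chi (γ' i / α' i)) * chi (γ' i / α' i))) * α' i) :
    lYAT - lKAT ≥
      (∑ i : Fin N, ((N : ℝ) - chi (γ i / α i)) * ((N : ℝ) - chi (γ i / α i) - 1) /
        (chi (γ i / α i) * (chi (γ i / α i) + 1))) * (δ / (N : ℝ)) := by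
  have hN0 : (0 : ℝ) < (N : ℝ) := by positivity
  have hδ0 : 0 ≤ δ := hδ ▸ le_max_left _ _
  have hδ2 : ∀ i, γ i - ((N : ℝ) - 1) * α i ≤ δ := by
    intro i
    rw [hδ]
    exact le_trans (Finset.le_sup' (fun j => γ j - ((N : ℝ) - 1) * α j) (Finset.mem_univ i))
      (le_max_right _ _)
  rw [hKAT, hYAT, ge_iff_le, Finset.sum_mul]
  simp only [hα', hγ']
  have hsum : δ = ∑ _i : Fin N, δ / (N : ℝ) := by
    rw [Finset.sum_const, Finset.card_univ, Fintype.card_fin, nsmul_eq_mul]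
    field_simp
  calc ∑ i : Fin N, ((N : ℝ) - chi (γ i / α i)) * ((N : ℝ) - chi (γ i / α i) - 1) /
        (chi (γ i / α i) * (chi (γ i / α i) + 1)) * (δ / (N : ℝ))
      ≤ ∑ i : Fin N, ((1 / chi ((γ i - (N : ℝ) * δ) / (α i - δ)) -
          ((γ i - (N : ℝ) * δ) / (α i - δ) - chi ((γ i - (N : ℝ) * δ) / (α i - δ))) /
            ((1 + chi ((γ i - (N : ℝ) * δ) / (α i - δ))) *
              chi ((γ i - (N : ℝ) * δ) / (α i - δ)))) * (α i - δ)
        - (1 / (⌊γ i / α i⌋ : ℝ) - (γ i / α i - (⌊γ i / α i⌋ : ℝ)) /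
            ((1 + (⌊γ i / α i⌋ : ℝ)) * (⌊γ i / α i⌋ : ℝ))) * α i
        + δ / (N : ℝ)) := by
        apply Finset.sum_le_sum
        intro i _
        exact key_ineq N hN (α i) (γ i) δ (hαpos i) (hγ1 i) hδ0 (hδα i) (hδβ i) (hδ2 i)
    _ = δ + (∑ i : Fin N, (1 / chi ((γ i - (N : ℝ) * δ) / (α i - δ)) -
          ((γ i - (N : ℝ) * δ) / (α i - δ) - chi ((γ i - (N : ℝ) * δ) / (α i - δ))) /
            ((1 + chi ((γ i - (N : ℝ) * δ) / (α i - δ))) *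
              chi ((γ i - (N : ℝ) * δ) / (α i - δ)))) * (α i - δ))
        - ∑ i : Fin N, (1 / (⌊γ i / α i⌋ : ℝ) - (γ i / α i - (⌊γ i / α i⌋ : ℝ)) /
            ((1 + (⌊γ i / α i⌋ : ℝ)) * (⌊γ i / α i⌋ : ℝ))) * α i := by
        rw [Finset.sum_add_distrib, Finset.sum_sub_distrib, ← hsum]
        ring
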